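/- Let φ be a C^{n+1} function on the interval [0,h] and let H be its degree-n Hermite interpolant matching φ^{(α)}(0) and φ^{(α)}(h) for 0 ≤ α ≤ k, where n = 2k+1. Then for all x ∈ [0,h] and 0 ≤ s ≤ n, |H^{(s)}(x) − φ^{(s)}(x)| ≤ C·h^{n+1−s}, where C depends only on k and on the supremum of |φ^{(n+1)}| on [0,h]. -/

import Mathlib

open Set Polynomial

/-- Polynomial evaluation is `C^n` for every `n`. -/
private lemma poly_contDiff (p : Polynomial ℝ) (n : ℕ) :
    ContDiff ℝ (n : ℕ) (fun x : ℝ => p.eval x) := by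
  have hrepr : (fun x : ℝ => p.eval x)
      = fun x : ℝ => ∑ i ∈ Finset.range (p.natDegree + 1), p.coeff i * x ^ i := by
    funext x; rw [Polynomial.eval_eq_sum_range]
  rw [hrepr]
  exact ContDiff.sum fun i _ => contDiff_const.mul (contDiff_id.pow i)

/-- Iterated (full) derivative of a polynomial. -/
private lemma poly_iteratedDeriv (p : Polynomial ℝ) (s : ℕ) :
    iteratedDeriv s (fun t : ℝ => p.eval t) = fun t => (Polynomial.derivative^[s] p).eval t := by
  induction s with
  | zero => simp
  | succ s ih =>
    rw [iteratedDeriv_succ, ih]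
    funext t
    rw [Function.iterate_succ_apply']
    exact ((⇑Polynomial.derivative)^[s] p).deriv

private lemma poly_iteratedDeriv_apply (p : Polynomial ℝ) (s : ℕ) (x : ℝ) :
    iteratedDeriv s (fun t : ℝ => p.eval t) x = (Polynomial.derivative^[s] p).eval x := by
  rw [poly_iteratedDeriv]

/-- Iterated derivative within a set (with unique derivatives) of a polynomial. -/
private lemma poly_iteratedDerivWithin (p : Polynomial ℝ) (s : ℕ) {S : Set ℝ}
    (hS : UniqueDiffOn ℝ S) :
    ∀ x ∈ S, iteratedDerivWithin s (fun t : ℝ => p.eval t) S x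
      = (Polynomial.derivative^[s] p).eval x := by
  induction s with
  | zero => intro x _; simp
  | succ s ih =>
    intro x hx
    rw [iteratedDerivWithin_succ,
      derivWithin_congr (fun y hy => ih y hy) (ih x hx),
      Function.iterate_succ_apply']
    exact ((⇑Polynomial.derivative)^[s] p).derivWithin (hS.uniqueDiffWithinAt hx)

/-- Rolle between consecutive zeros: `m + 1` ordered zeros of `F` give `m` ordered zeros
of `deriv F`, strictly between the extreme zeros. -/
private lemma interleave {F : ℝ → ℝ} {m : ℕ} (p : Fin (m + 1) → ℝ) (hp : StrictMono p)
    (hz : ∀ i, F (p i) = 0)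
    (hc : ContinuousOn F (Set.Icc (p 0) (p (Fin.last m)))) :
    ∃ q : Fin m → ℝ, StrictMono q ∧ (∀ i, q i ∈ Set.Ioo (p 0) (p (Fin.last m))) ∧
      ∀ i, deriv F (q i) = 0 := by
  have key : ∀ i : Fin m, ∃ c ∈ Set.Ioo (p i.castSucc) (p i.succ), deriv F c = 0 := by
    intro i
    have hlt : p i.castSucc < p i.succ := hp (Fin.castSucc_lt_succ (i := i))
    have hsub : Set.Icc (p i.castSucc) (p i.succ) ⊆ Set.Icc (p 0) (p (Fin.last m)) :=
      Set.Icc_subset_Icc (hp.monotone (Fin.zero_le _)) (hp.monotone (Fin.le_last _))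
    exact exists_deriv_eq_zero hlt (hc.mono hsub) (by rw [hz, hz])
  choose q hq hq0 using key
  refine ⟨q, ?_, ?_, hq0⟩
  · intro i j hij
    have hij' : (i : ℕ) < (j : ℕ) := hij
    calc q i < p i.succ := (hq i).2
      _ ≤ p j.castSucc := hp.monotone (by
          simp only [Fin.le_def, Fin.val_succ, Fin.coe_castSucc]; omega)
      _ < q j := (hq j).1
  · intro i
    exact ⟨lt_of_le_of_lt (hp.monotone (Fin.zero_le _)) (hq i).1,
      lt_of_lt_of_le (hq i).2 (hp.monotone (Fin.le_last _))⟩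

/-- If all derivatives of `f` up to order `k` vanish at both endpoints of `[0,h]`, then
each derivative of order `s ≤ 2k+1` has a zero in `[0,h]`. -/
private lemma exists_zero (k : ℕ) {h : ℝ} (hh : 0 < h) {f : ℝ → ℝ}
    (hf : ContDiffOn ℝ (2 * k + 2 : ℕ) f (Set.Icc 0 h))
    (h0 : ∀ α ≤ k, iteratedDerivWithin α f (Set.Icc 0 h) 0 = 0)
    (h1 : ∀ α ≤ k, iteratedDerivWithin α f (Set.Icc 0 h) h = 0) :
    ∀ s ≤ 2 * k + 1, ∃ ξ ∈ Set.Icc (0 : ℝ) h, iteratedDerivWithin s f (Set.Icc 0 h) ξ = 0 := by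
  have hS : UniqueDiffOn ℝ (Set.Icc (0 : ℝ) h) := uniqueDiffOn_Icc hh
  have cont : ∀ s : ℕ, s ≤ 2 * k + 2 →
      ContinuousOn (iteratedDerivWithin s f (Set.Icc 0 h)) (Set.Icc (0 : ℝ) h) :=
    fun s hs => hf.continuousOn_iteratedDerivWithin (by exact_mod_cast hs) hS
  -- Rolle step for ordered families of zeros
  have step : ∀ s : ℕ, s + 1 ≤ 2 * k + 2 → ∀ m : ℕ, ∀ ζ : Fin (m + 1) → ℝ, StrictMono ζ →
      (∀ i, ζ i ∈ Set.Icc (0 : ℝ) h) →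
      (∀ i, iteratedDerivWithin s f (Set.Icc 0 h) (ζ i) = 0) →
      ∃ q : Fin m → ℝ, StrictMono q ∧ (∀ i, q i ∈ Set.Ioo (0 : ℝ) h) ∧
        ∀ i, iteratedDerivWithin (s + 1) f (Set.Icc 0 h) (q i) = 0 := by
    intro s hs m ζ hmono hmem hzero
    have hsub : Set.Icc (ζ 0) (ζ (Fin.last m)) ⊆ Set.Icc (0 : ℝ) h :=
      Set.Icc_subset_Icc (hmem 0).1 (hmem (Fin.last m)).2
    obtain ⟨q, hqmono, hqmem, hq0⟩ :=
      interleave ζ hmono hzero (((cont s (by omega))).mono hsub)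
    have hooq : ∀ i, q i ∈ Set.Ioo (0 : ℝ) h := fun i =>
      ⟨lt_of_le_of_lt (hmem 0).1 (hqmem i).1, lt_of_lt_of_le (hqmem i).2 (hmem (Fin.last m)).2⟩
    refine ⟨q, hqmono, hooq, fun i => ?_⟩
    have hqS : q i ∈ Set.Icc (0 : ℝ) h := Set.Ioo_subset_Icc_self (hooq i)
    rw [iteratedDerivWithin_succ,
      derivWithin_of_mem_nhds (Icc_mem_nhds (hooq i).1 (hooq i).2)]
    exact hq0 i
  -- Augment interior zeros with the endpoints
  have augment : ∀ s : ℕ, ∀ ζ : Fin s → ℝ, StrictMono ζ → (∀ i, ζ i ∈ Set.Ioo (0 : ℝ) h) →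
      ∃ p : Fin (s + 1 + 1) → ℝ, StrictMono p ∧ (∀ i, p i ∈ Set.Icc (0 : ℝ) h) ∧
        p 0 = 0 ∧ p (Fin.last (s + 1)) = h ∧
        ∀ i : Fin (s + 1 + 1), (i : ℕ) ≠ 0 → (i : ℕ) ≠ s + 1 →
          ∃ j : Fin s, p i = ζ j := by
    intro s ζ hmono hmem
    refine ⟨fun i => if h0 : (i : ℕ) = 0 then 0 else if h1 : (i : ℕ) = s + 1 then h
      else ζ ⟨(i : ℕ) - 1, by have := i.isLt; omega⟩, ?_, ?_, ?_, ?_, ?_⟩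
    · intro a b hab
      have hab' : (a : ℕ) < (b : ℕ) := hab
      have ha := a.isLt; have hb := b.isLt
      dsimp only
      split_ifs with h1 h2 h3 h4 h5 h6 h7 h8
      any_goals omega
      · exact (hmem _).1
      · exact (hmem _).2
      · exact hmono (by simp only [Fin.mk_lt_mk]; omega)
    · intro i
      dsimp only
      split_ifs
      · exact ⟨le_refl _, hh.le⟩
      · exact ⟨hh.le, le_refl _⟩
      · exact Set.Ioo_subset_Icc_self (hmem _)
    · simp
    · simp
    · intro i hi0 hil
      dsimp only
      rw [dif_neg hi0, dif_neg hil]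
      exact ⟨_, rfl⟩
  -- Phase A: for s ≤ k, the s-th derivative has s interior zeros
  have claimA : ∀ s : ℕ, s ≤ k → ∃ ζ : Fin s → ℝ, StrictMono ζ ∧
      (∀ i, ζ i ∈ Set.Ioo (0 : ℝ) h) ∧
      ∀ i, iteratedDerivWithin s f (Set.Icc 0 h) (ζ i) = 0 := by
    intro s
    induction s with
    | zero =>
      intro _
      exact ⟨Fin.elim0, fun i => i.elim0, fun i => i.elim0, fun i => i.elim0⟩
    | succ s ih =>
      intro hsk
      obtain ⟨ζ, hmono, hmem, hzero⟩ := ih (by omega)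
      obtain ⟨p, hpmono, hpmem, hp0, hpl, hpmid⟩ := augment s ζ hmono hmem
      have hpz : ∀ i, iteratedDerivWithin s f (Set.Icc 0 h) (p i) = 0 := by
        intro i
        by_cases hi0 : (i : ℕ) = 0
        · have : i = 0 := Fin.ext hi0
          rw [this, hp0]; exact h0 s (by omega)
        by_cases hil : (i : ℕ) = s + 1
        · have : i = Fin.last (s + 1) := Fin.ext hil
          rw [this, hpl]; exact h1 s (by omega)
        · obtain ⟨j, hj⟩ := hpmid i hi0 hil
          rw [hj]; exact hzero j
      obtain ⟨q, hqmono, hqmem, hq0⟩ := step s (by omega) (s + 1) p hpmono hpmem hpz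
      exact ⟨q, hqmono, hqmem, hq0⟩
  -- Phase B: downward from s = k, keeping count of zeros
  have claimB : ∀ j : ℕ, j ≤ k + 1 → ∃ ζ : Fin (k + 1 - j + 1) → ℝ, StrictMono ζ ∧
      (∀ i, ζ i ∈ Set.Icc (0 : ℝ) h) ∧
      ∀ i, iteratedDerivWithin (k + j) f (Set.Icc 0 h) (ζ i) = 0 := by
    intro j
    induction j with
    | zero =>
      intro _
      obtain ⟨ζ, hmono, hmem, hzero⟩ := claimA k (le_refl k)
      obtain ⟨p, hpmono, hpmem, hp0, hpl, hpmid⟩ := augment k ζ hmono hmem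
      have hpz : ∀ i, iteratedDerivWithin k f (Set.Icc 0 h) (p i) = 0 := by
        intro i
        by_cases hi0 : (i : ℕ) = 0
        · have : i = 0 := Fin.ext hi0
          rw [this, hp0]; exact h0 k (le_refl k)
        by_cases hil : (i : ℕ) = k + 1
        · have : i = Fin.last (k + 1) := Fin.ext hil
          rw [this, hpl]; exact h1 k (le_refl k)
        · obtain ⟨j, hj⟩ := hpmid i hi0 hil
          rw [hj]; exact hzero j
      exact ⟨p, hpmono, hpmem, fun i => by rw [Nat.add_zero]; exact hpz i⟩
    | succ j ihj =>
      intro hj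
      obtain ⟨ζ, hmono, hmem, hzero⟩ := ihj (by omega)
      have hsz : k + 1 - j + 1 = (k + 1 - j) + 1 := rfl
      obtain ⟨q, hqmono, hqmem, hq0⟩ :=
        step (k + j) (by omega) (k + 1 - j) ζ hmono hmem hzero
      have hcast : k + 1 - (j + 1) + 1 = k + 1 - j := by omega
      refine ⟨fun i => q (Fin.cast hcast i), ?_, ?_, ?_⟩
      · intro a b hab
        exact hqmono (by rw [Fin.lt_def, Fin.coe_cast, Fin.coe_cast]; exact hab)
      · intro i; exact Set.Ioo_subset_Icc_self (hqmem _)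
      · intro i
        have : k + (j + 1) = k + j + 1 := rfl
        rw [this]
        exact hq0 _
  -- conclusion
  intro s hs
  rcases le_or_gt s k with hsk | hsk
  · exact ⟨0, ⟨le_refl _, hh.le⟩, h0 s hsk⟩
  · obtain ⟨ζ, _, hmem, hzero⟩ := claimB (s - k) (by omega)
    refine ⟨ζ 0, hmem 0, ?_⟩
    have : k + (s - k) = s := by omega
    rw [this] at hzero
    exact hzero 0

/-- One-dimensional Hermite interpolation error estimate. For each `k`, there is a constant
`C M` depending only on `k` and a bound `M` for the `(n+1)`-st derivative (with `n = 2k+1`)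
such that: for every interval `[0,h]`, every `C^{n+1}` function `φ` on `[0,h]` whose
`(n+1)`-st derivative is bounded by `M`, and its Hermite interpolant `H` (degree ≤ `n`,
matching derivatives of orders `0,…,k` at the endpoints), all derivatives of order `s ≤ n`
of the error are `O(h^{n+1-s})`. -/
theorem hermite_interpolation_error (k : ℕ) :
    ∃ C : ℝ → ℝ, ∀ h : ℝ, 0 < h → ∀ φ : ℝ → ℝ,
      ContDiffOn ℝ (2 * k + 2 : ℕ) φ (Set.Icc 0 h) →
      ∀ M : ℝ, (∀ x ∈ Set.Icc (0 : ℝ) h,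
          |iteratedDerivWithin (2 * k + 2) φ (Set.Icc 0 h) x| ≤ M) →
      ∀ H : Polynomial ℝ, H.natDegree ≤ 2 * k + 1 →
      (∀ α ≤ k, iteratedDeriv α (fun t => H.eval t) 0 =
          iteratedDerivWithin α φ (Set.Icc 0 h) 0) →
      (∀ α ≤ k, iteratedDeriv α (fun t => H.eval t) h =
          iteratedDerivWithin α φ (Set.Icc 0 h) h) →
      ∀ x ∈ Set.Icc (0 : ℝ) h, ∀ s ≤ 2 * k + 1,
        |iteratedDeriv s (fun t => H.eval t) x - iteratedDerivWithin s φ (Set.Icc 0 h) x| ≤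
          C M * h ^ (2 * k + 2 - s) := by
  refine ⟨fun M => M, ?_⟩
  intro h hh φ hφ M hM H hdeg hint0 hint1 x hx s hs
  have hS : UniqueDiffOn ℝ (Set.Icc (0 : ℝ) h) := uniqueDiffOn_Icc hh
  have h0mem : (0 : ℝ) ∈ Set.Icc (0 : ℝ) h := ⟨le_refl _, hh.le⟩
  have hhmem : h ∈ Set.Icc (0 : ℝ) h := ⟨hh.le, le_refl _⟩
  set E : ℝ → ℝ := (fun t : ℝ => H.eval t) - φ with hE
  have hEc : ContDiffOn ℝ (2 * k + 2 : ℕ) E (Set.Icc 0 h) :=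
    ((poly_contDiff H (2 * k + 2)).contDiffOn).sub hφ
  have hesplit : ∀ s' : ℕ, s' ≤ 2 * k + 2 → ∀ y ∈ Set.Icc (0 : ℝ) h,
      iteratedDerivWithin s' E (Set.Icc 0 h) y
        = (Polynomial.derivative^[s'] H).eval y - iteratedDerivWithin s' φ (Set.Icc 0 h) y := by
    intro s' hs' y hy
    rw [hE, iteratedDerivWithin_sub hy hS ((poly_contDiff H s').contDiffOn y hy)
        (hφ.of_le (by exact_mod_cast hs') y hy),
      poly_iteratedDerivWithin H s' hS y hy]
  have h0' : ∀ α ≤ k, iteratedDerivWithin α E (Set.Icc 0 h) 0 = 0 := by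
    intro α hα
    rw [hesplit α (by omega) 0 h0mem]
    have := hint0 α hα
    rw [poly_iteratedDeriv_apply H α 0] at this
    rw [this, sub_self]
  have h1' : ∀ α ≤ k, iteratedDerivWithin α E (Set.Icc 0 h) h = 0 := by
    intro α hα
    rw [hesplit α (by omega) h hhmem]
    have := hint1 α hα
    rw [poly_iteratedDeriv_apply H α h] at this
    rw [this, sub_self]
  have hbase : ∀ y ∈ Set.Icc (0 : ℝ) h,
      |iteratedDerivWithin (2 * k + 2) E (Set.Icc 0 h) y| ≤ M := by
    intro y hy
    rw [hesplit (2 * k + 2) (le_refl _) y hy,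
      Polynomial.iterate_derivative_eq_zero (lt_of_le_of_lt hdeg (by omega))]
    simpa using hM y hy
  have hM0 : 0 ≤ M := le_trans (abs_nonneg _) (hM 0 h0mem)
  have main : ∀ d : ℕ, ∀ s' : ℕ, s' + d = 2 * k + 2 → ∀ y ∈ Set.Icc (0 : ℝ) h,
      |iteratedDerivWithin s' E (Set.Icc 0 h) y| ≤ M * h ^ d := by
    intro d
    induction d with
    | zero =>
      intro s' hs' y hy
      have : s' = 2 * k + 2 := by omega
      subst this
      simpa using hbase y hy
    | succ d ihd =>
      intro s' hs' y hy
      obtain ⟨ξ, hξS, hξ0⟩ := exists_zero k hh hEc h0' h1' s' (by omega)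
      have hdiff : DifferentiableOn ℝ (iteratedDerivWithin s' E (Set.Icc 0 h))
          (Set.Icc (0 : ℝ) h) :=
        hEc.differentiableOn_iteratedDerivWithin (by exact_mod_cast (by omega : s' < 2 * k + 2)) hS
      have hbound : ∀ z ∈ Set.Icc (0 : ℝ) h,
          ‖derivWithin (iteratedDerivWithin s' E (Set.Icc 0 h)) (Set.Icc 0 h) z‖ ≤ M * h ^ d := by
        intro z hz
        rw [← iteratedDerivWithin_succ]
        simpa [Real.norm_eq_abs] using ihd (s' + 1) (by omega) z hz
      have hmvt := Convex.norm_image_sub_le_of_norm_derivWithin_le hdiff hbound (convex_Icc 0 h) hξS hy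
      have hdist : |y - ξ| ≤ h := by
        rw [abs_sub_le_iff]
        constructor <;> [linarith [hy.2, hξS.1]; linarith [hy.1, hξS.2]]
      calc |iteratedDerivWithin s' E (Set.Icc 0 h) y|
          = ‖iteratedDerivWithin s' E (Set.Icc 0 h) y
              - iteratedDerivWithin s' E (Set.Icc 0 h) ξ‖ := by
            rw [hξ0, sub_zero, Real.norm_eq_abs]
        _ ≤ M * h ^ d * ‖y - ξ‖ := hmvt
        _ ≤ M * h ^ d * h := by
            refine mul_le_mul_of_nonneg_left ?_ (mul_nonneg hM0 (pow_nonneg hh.le d))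
            simpa [Real.norm_eq_abs] using hdist
        _ = M * h ^ (d + 1) := by rw [pow_succ]; ring
  have hgoal : iteratedDeriv s (fun t => H.eval t) x - iteratedDerivWithin s φ (Set.Icc 0 h) x
      = iteratedDerivWithin s E (Set.Icc 0 h) x := by
    rw [hesplit s (by omega) x hx, poly_iteratedDeriv_apply H s x]
  rw [hgoal]
  exact main (2 * k + 2 - s) s (by omega) x hx
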